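/- arXiv:math/9502203 — 3 statements merged into one kernel-verified Lean document; each statement's English description precedes it below -/
import Mathlib

section
/- In the amalgamation setting, let B_t = ⋃ₙ Bₙ. For all k and n: if (p,q) ∈ B_k ∖ Bₙ and (p',q') ∈ B_t satisfies p' ≤_t p and q ⊆ q', then (p',q') ∈ B_k ∖ Bₙ. -/
open Cardinal Set

noncomputable section

/-- A partial function from ordinals to ordinals, represented by its graph. -/
abbrev ColFun := Set (Ordinal × Ordinal)

/-- `q ∈ Col(X)`: `q` is (the graph of) a function whose domain is an ordinal `< ω₁`
and whose range is a subset of `X`. -/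
def IsColFun (X : Set Ordinal) (q : ColFun) : Prop :=
  (∀ a b b', (a, b) ∈ q → (a, b') ∈ q → b = b') ∧
  (∃ δ : Ordinal, δ < (aleph 1).ord ∧ ∀ a : Ordinal, (∃ b, (a, b) ∈ q) ↔ a < δ) ∧
  (∀ a b, (a, b) ∈ q → b ∈ X)

/-- A quadruple `((A, <), B, C, F)`; `F` is a partial function represented by its graph. -/
structure Quad where
  A : Set Ordinal
  lt : Ordinal → Ordinal → Prop
  B : Set (Ordinal × ColFun)
  C : Set (ℕ → Ordinal)
  F : Set ((ℕ → Ordinal) × (Ordinal × ColFun) × ℕ)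

namespace Quad

/-- `x ≤ᵣ y`. -/
def leR (r : Quad) (x y : Ordinal) : Prop := r.lt x y ∨ x = y

/-- `x ⊥ᵣ y`: no `z ∈ Aᵣ` with `z ≤ᵣ x` and `z ≤ᵣ y`. -/
def Incomp (r : Quad) (x y : Ordinal) : Prop := ¬ ∃ z ∈ r.A, r.leR z x ∧ r.leR z y

/-- `r` is a forcing condition. -/
def IsCond (r : Quad) : Prop :=
  -- (1) A is a countable set of ordinals < ω₂
  r.A.Countable ∧
  (∀ a ∈ r.A, a < (aleph 2).ord) ∧
  -- (2) <ᵣ is a strict partial order on A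
  (∀ a b, r.lt a b → a ∈ r.A ∧ b ∈ r.A) ∧
  (∀ a b c, r.lt a b → r.lt b c → r.lt a c) ∧
  -- (3) b <ᵣ a implies a < b (whence <ᵣ is irreflexive and asymmetric)
  (∀ a b, r.lt b a → a < b) ∧
  -- (4) B is a countable subset of A × Col(A) with p ∈ range q for (p,q) ∈ B
  r.B.Countable ∧
  (∀ pq ∈ r.B, pq.1 ∈ r.A ∧ IsColFun r.A pq.2 ∧ ∃ α, (α, pq.1) ∈ pq.2) ∧
  -- (5) C is a countable set of <ᵣ-descending sequences in A without lower bound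
  r.C.Countable ∧
  (∀ a ∈ r.C, (∀ n, a n ∈ r.A) ∧ (∀ n, r.lt (a (n + 1)) (a n)) ∧
    ¬ ∃ z ∈ r.A, ∀ n, r.leR z (a n)) ∧
  -- (6) F is a (partial) function whose domain consists exactly of the pairs
  -- (⟨aₙ⟩, (p,q)) with ⟨aₙ⟩ ∈ C, (p,q) ∈ B, p ≥ a₀, satisfying (*)
  (∀ x ∈ r.F, x.1 ∈ r.C ∧ x.2.1 ∈ r.B ∧ x.1 0 ≤ x.2.1.1) ∧
  (∀ a pq, a ∈ r.C → pq ∈ r.B → a 0 ≤ pq.1 → ∃! m : ℕ, (a, pq, m) ∈ r.F) ∧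
  (∀ a pq m, (a, pq, m) ∈ r.F →
    ∀ p'q' ∈ r.B, r.leR p'q'.1 pq.1 → pq.2 ⊆ p'q'.2 →
      r.lt p'q'.1 (a m) → ∃ k, r.Incomp p'q'.1 (a k))

/-- `Ext r s`: `r ≤_R s`, i.e. `r` is stronger than `s`. -/
def Ext (r s : Quad) : Prop :=
  s.A ⊆ r.A ∧
  (∀ a ∈ s.A, ∀ b ∈ s.A, (r.lt a b ↔ s.lt a b)) ∧
  (∀ a ∈ s.A, ∀ b ∈ s.A, (r.Incomp a b ↔ s.Incomp a b)) ∧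
  s.B ⊆ r.B ∧ s.C ⊆ r.C ∧ s.F ⊆ r.F

end Quad

open Quad

/-- Push a `Col`-function forward along a map of ordinals (acting on the range). -/
def mapCol (f : Ordinal → Ordinal) (q : ColFun) : ColFun :=
  {x | ∃ a b, (a, b) ∈ q ∧ x = (a, f b)}

/-- The amalgamation setting: a sequence of conditions forming a Δ-system with root `D`,
a commutative system of isomorphisms `π`, and descending chains `cⁿ` matched by `π`. -/
structure Amalg where
  r : ℕ → Quad
  cond : ∀ n, (r n).IsCond
  D : Set Ordinal
  inter : ∀ m n : ℕ, m < n → (r m).A ∩ (r n).A = D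
  supD_lt : ∀ m : ℕ, ∀ x ∈ (r m).A \ D, sSup D < x
  supA_lt : ∀ m n : ℕ, m < n → ∀ x ∈ (r n).A \ D, sSup (r m).A < x
  lt_agree : ∀ m n : ℕ, ∀ a ∈ D, ∀ b ∈ D, ((r m).lt a b ↔ (r n).lt a b)
  incomp_agree : ∀ m n : ℕ, ∀ a ∈ D, ∀ b ∈ D, ((r m).Incomp a b ↔ (r n).Incomp a b)
  B_agree : ∀ m n : ℕ, ∀ pq : Ordinal × ColFun, pq.1 ∈ D → IsColFun D pq.2 →
    (pq ∈ (r m).B ↔ pq ∈ (r n).B)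
  C_agree : ∀ m n : ℕ, ∀ a : ℕ → Ordinal, (∀ k, a k ∈ D) → (a ∈ (r m).C ↔ a ∈ (r n).C)
  pi : ℕ → ℕ → Ordinal → Ordinal
  pi_mem : ∀ m n : ℕ, ∀ x ∈ (r m).A, pi m n x ∈ (r n).A
  pi_id : ∀ m : ℕ, ∀ x ∈ (r m).A, pi m m x = x
  pi_inv : ∀ m n : ℕ, ∀ x ∈ (r m).A, pi n m (pi m n x) = x
  pi_comm : ∀ m n k : ℕ, ∀ x ∈ (r m).A, pi n k (pi m n x) = pi m k x
  pi_idD : ∀ m n : ℕ, ∀ x ∈ D, pi m n x = x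
  pi_iso : ∀ m n : ℕ, ∀ x ∈ (r m).A, ∀ y ∈ (r m).A,
    ((r m).lt x y ↔ (r n).lt (pi m n x) (pi m n y))
  pi_B : ∀ m n : ℕ, ∀ pq ∈ (r m).B, (pi m n pq.1, mapCol (pi m n) pq.2) ∈ (r n).B
  pi_C : ∀ m n : ℕ, ∀ a ∈ (r m).C, (fun k => pi m n (a k)) ∈ (r n).C
  pi_F : ∀ m n : ℕ, ∀ x ∈ (r m).F,
    ((fun k => pi m n (x.1 k)), (pi m n x.2.1.1, mapCol (pi m n) x.2.1.2), x.2.2) ∈ (r n).F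
  c : ℕ → ℕ → Ordinal
  c_mem : ∀ n k : ℕ, c n k ∈ (r n).A \ D
  c_dec : ∀ n k : ℕ, (r n).lt (c n (k + 1)) (c n k)
  pi_c : ∀ m n k : ℕ, pi m n (c m k) = c n k

namespace Amalg

/-- `A_t = ⋃ₙ Aₙ`. -/
def At (S : Amalg) : Set Ordinal := ⋃ n, (S.r n).A

/-- `<_t`: the transitive closure of the union of the `<ₙ` together with the pairs
`aⁿ⁺¹ₙ₊₁ <_t bⁿₙ` (recall `aⁿₖ = cⁿ₂ₖ` and `bⁿₖ = cⁿ₂ₖ₊₁`). -/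
def ltT (S : Amalg) : Ordinal → Ordinal → Prop :=
  Relation.TransGen (fun x y =>
    (∃ n, (S.r n).lt x y) ∨ ∃ n : ℕ, x = S.c (n + 1) (2 * (n + 1)) ∧ y = S.c n (2 * n + 1))

/-- `x ≤_t y`. -/
def leT (S : Amalg) (x y : Ordinal) : Prop := S.ltT x y ∨ x = y

/-- `x` and `y` are compatible in `<_t`. -/
def CompatT (S : Amalg) (x y : Ordinal) : Prop := ∃ z ∈ S.At, S.leT z x ∧ S.leT z y

end Amalg

/-- Lemma 8: if `(p,q) ∈ B_k ∖ Bₙ` and `(p',q') ∈ B_t` is stronger than `(p,q)`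
(in `≤_t`), then `(p',q') ∈ B_k ∖ Bₙ`. -/
theorem stmt10 (S : Amalg) (k n : ℕ) (pq : Ordinal × ColFun)
    (hpq : pq ∈ (S.r k).B \ (S.r n).B)
    (p'q' : Ordinal × ColFun) (hBt : p'q' ∈ ⋃ j, (S.r j).B)
    (hle : S.leT p'q'.1 pq.1) (hsub : pq.2 ⊆ p'q'.2) :
    p'q' ∈ (S.r k).B \ (S.r n).B := by
  obtain ⟨hpqk, hpqn⟩ := hpq
  rw [Set.mem_iUnion] at hBt
  obtain ⟨j, hj⟩ := hBt
  have hk := (S.cond k).2.2.2.2.2.2.1 pq hpqk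
  have hj' := (S.cond j).2.2.2.2.2.2.1 p'q' hj
  have hkn : k ≠ n := fun h => hpqn (h ▸ hpqk)
  have hinter : ∀ m m' : ℕ, m ≠ m' → (S.r m).A ∩ (S.r m').A = S.D := by
    intro m m' h
    rcases lt_or_gt_of_ne h with h | h
    · exact S.inter m m' h
    · rw [Set.inter_comm]; exact S.inter m' m h
  obtain ⟨α, w, hαw, hwAk, hwD⟩ :
      ∃ α w, (α, w) ∈ pq.2 ∧ w ∈ (S.r k).A ∧ w ∉ S.D := by
    by_cases hD : pq.1 ∈ S.D
    · by_contra hcon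
      push_neg at hcon
      apply hpqn
      rw [← S.B_agree k n pq hD ⟨hk.2.1.1, hk.2.1.2.1, fun a b hab =>
        hcon a b hab (hk.2.1.2.2 a b hab)⟩]
      exact hpqk
    · obtain ⟨α, hα⟩ := hk.2.2
      exact ⟨α, pq.1, hα, hk.1, hD⟩
  have hwq' : (α, w) ∈ p'q'.2 := hsub hαw
  have hwAj : w ∈ (S.r j).A := hj'.2.1.2.2 α w hwq'
  have hjk : j = k := by
    by_contra h
    exact hwD (hinter j k h ▸ ⟨hwAj, hwAk⟩)
  subst hjk
  refine ⟨hj, fun hn => ?_⟩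
  have hn' := (S.cond n).2.2.2.2.2.2.1 p'q' hn
  have hwAn : w ∈ (S.r n).A := hn'.2.1.2.2 α w hwq'
  exact hwD (hinter j n hkn ▸ ⟨hwAk, hwAn⟩)
end
end

section
/- Let P be a partial order in which every element has a strictly smaller element, let B be a complete Boolean algebra, let e : P → B be an order embedding (a ≤ b ↔ e(a) ≤ e(b)) with e(a) ≠ ⊥ for all a and with dense image in B ∖ {⊥}, and let D ⊆ B ∖ {⊥} be dense and σ-closed. Define a ≺ b iff a < b in P and there exists d ∈ D with e(a) ≤ d ≤ e(b). Then: (i) ≺ is transitive; (ii) a ≺ b implies a < b in P; (iii) for every a ∈ P there exists b ∈ P with b ≺ a; and (iv) for every sequence ⟨aₙ : n ∈ ℕ⟩ in P with aₙ₊₁ ≺ aₙ for all n, there exists p ∈ P with p ≺ aₙ for all n. -/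
/-- Properties of the auxiliary ordering `≺` (`a ≺ b ↔ a < b ∧ ∃ d ∈ D, e a ≤ d ≤ e b`)
used in the proof that `B(P)` is not countably closed: it is transitive, refines `<`,
every element has a `≺`-smaller one, and `(P, ≺)` is σ-closed. -/
theorem stmt11 {P : Type*} [PartialOrder P] (hP : ∀ a : P, ∃ b, b < a)
    {B : Type*} [CompleteBooleanAlgebra B] (e : P → B)
    (hemb : ∀ a b : P, a ≤ b ↔ e a ≤ e b) (hne : ∀ a : P, e a ≠ ⊥)
    (hdense : ∀ b : B, b ≠ ⊥ → ∃ a : P, e a ≤ b)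
    (D : Set B) (hDne : ∀ d ∈ D, d ≠ ⊥)
    (hDdense : ∀ b : B, b ≠ ⊥ → ∃ d ∈ D, d ≤ b)
    (hDsigma : ∀ s : ℕ → B, (∀ n, s n ∈ D) → (∀ n, s (n + 1) ≤ s n) →
      ∃ d ∈ D, ∀ n, d ≤ s n) :
    (∀ a b c : P, (a < b ∧ ∃ d ∈ D, e a ≤ d ∧ d ≤ e b) →
      (b < c ∧ ∃ d ∈ D, e b ≤ d ∧ d ≤ e c) → (a < c ∧ ∃ d ∈ D, e a ≤ d ∧ d ≤ e c)) ∧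
    (∀ a b : P, (a < b ∧ ∃ d ∈ D, e a ≤ d ∧ d ≤ e b) → a < b) ∧
    (∀ a : P, ∃ b : P, b < a ∧ ∃ d ∈ D, e b ≤ d ∧ d ≤ e a) ∧
    (∀ a : ℕ → P, (∀ n, a (n + 1) < a n ∧ ∃ d ∈ D, e (a (n + 1)) ≤ d ∧ d ≤ e (a n)) →
      ∃ p : P, ∀ n, p < a n ∧ ∃ d ∈ D, e p ≤ d ∧ d ≤ e (a n)) := by

  refine ⟨?_, ?_, ?_, ?_⟩
  · rintro a b c ⟨hab, d, hdD, had, hdb⟩ ⟨hbc, d', hd'D, hbd', hd'c⟩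
    exact ⟨hab.trans hbc, d, hdD, had, hdb.trans (hbd'.trans hd'c)⟩
  · rintro a b ⟨h, -⟩; exact h
  · intro a
    obtain ⟨d, hdD, hda⟩ := hDdense (e a) (hne a)
    obtain ⟨b', hb'⟩ := hdense d (hDne d hdD)
    obtain ⟨b, hbb'⟩ := hP b'
    have hba : b < a := hbb'.trans_le ((hemb b' a).mpr (hb'.trans hda))
    exact ⟨b, hba, d, hdD, ((hemb b b').mp hbb'.le).trans hb', hda⟩
  · intro a ha
    choose d hdD hed hde using fun n => (ha n).2
    have hdec : ∀ n, d (n + 1) ≤ d n := fun n => (hde (n+1)).trans (hed n)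
    obtain ⟨dw, hdwD, hdw⟩ := hDsigma d hdD hdec
    obtain ⟨q, hq⟩ := hdense dw (hDne dw hdwD)
    obtain ⟨p, hpq⟩ := hP q
    refine ⟨p, fun n => ⟨?_, dw, hdwD, ((hemb p q).mp hpq.le).trans hq, (hdw n).trans (hde n)⟩⟩
    exact hpq.trans_le ((hemb q (a n)).mpr (hq.trans ((hdw n).trans (hde n))))
end

section
/- If B is a game-closed complete Boolean algebra and A is a complete subalgebra of B, then A is a game-closed complete Boolean algebra. -/
noncomputable section

variable {B : Type*} [CompleteBooleanAlgebra B]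

/-- A position in the game `G(B)` relative to a subset `A ⊆ B`: an odd-length
`≤`-decreasing list of nonzero elements of `A` (listed as `[b₀, …, b₂ₙ]`). -/
def ValidPos (A : Set B) (l : List B) : Prop :=
  Odd l.length ∧ l.Chain' (fun x y => y ≤ x) ∧ ∀ x ∈ l, x ∈ A ∧ x ≠ ⊥

/-- `σ` is a winning strategy for player II in the game `G` played on the subset `A` of `B`:
at every position `(b₀, …, b₂ₙ)` it answers with a nonzero `b₂ₙ₊₁ ∈ A`, `b₂ₙ₊₁ ≤ b₂ₙ`,
and every infinite play consistent with `σ` has a nonzero lower bound in `A`. -/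
def IsWinningStrategyOn (A : Set B) (σ : List B → B) : Prop :=
  (∀ l : List B, ValidPos A l → σ l ∈ A ∧ σ l ≠ ⊥ ∧ ∀ h : l ≠ [], σ l ≤ l.getLast h) ∧
  (∀ b : ℕ → B, (∀ n, b n ∈ A) → (∀ n, b n ≠ ⊥) → (∀ n, b (n + 1) ≤ b n) →
    (∀ n, b (2 * n + 1) = σ (List.ofFn fun i : Fin (2 * n + 1) => b i)) →
    ∃ z ∈ A, z ≠ ⊥ ∧ ∀ n, z ≤ b n)

/-- `A ⊆ B` (with the induced structure) is game-closed: player II has a winning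
strategy in the descending-chain game on `A`. -/
def GameClosedOn (A : Set B) : Prop :=
  ∃ σ : List B → B, IsWinningStrategyOn A σ

/-- The complete Boolean algebra `B` is game-closed. -/
def GameClosed (B : Type*) [CompleteBooleanAlgebra B] : Prop :=
  GameClosedOn (Set.univ : Set B)

/-- `A ⊆ B` (with the induced structure) is countably closed: the nonzero elements of `A`
have a dense σ-closed subset. -/
def CountablyClosedOn (A : Set B) : Prop :=
  ∃ S : Set B, S ⊆ A ∧ (∀ s ∈ S, s ≠ ⊥) ∧
    (∀ b ∈ A, b ≠ ⊥ → ∃ s ∈ S, s ≤ b) ∧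
    (∀ f : ℕ → B, (∀ n, f n ∈ S) → (∀ n, f (n + 1) ≤ f n) → ∃ z ∈ S, ∀ n, z ≤ f n)

/-- The complete Boolean algebra `B` is countably closed. -/
def CountablyClosed (B : Type*) [CompleteBooleanAlgebra B] : Prop :=
  CountablyClosedOn (Set.univ : Set B)

/-- `A` is a complete subalgebra of `B`: a Boolean subalgebra closed under arbitrary
suprema and infima computed in `B`. -/
def IsCompleteSubalgebra (A : Set B) : Prop :=
  (⊥ : B) ∈ A ∧ (⊤ : B) ∈ A ∧
  (∀ x ∈ A, xᶜ ∈ A) ∧ (∀ x ∈ A, ∀ y ∈ A, x ⊔ y ∈ A) ∧ (∀ x ∈ A, ∀ y ∈ A, x ⊓ y ∈ A) ∧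
  (∀ S : Set B, S ⊆ A → sSup S ∈ A) ∧ (∀ S : Set B, S ⊆ A → sInf S ∈ A)

/-! ### Auxiliary machinery for the proof -/

/-- Projection onto the subalgebra `A`: the least element of `A` above `x`. -/
noncomputable def projOn (A : Set B) (x : B) : B := sInf {a | a ∈ A ∧ x ≤ a}

theorem le_projOn (A : Set B) (x : B) : x ≤ projOn A x :=
  le_sInf fun _ h => h.2

theorem projOn_le {A : Set B} {x a : B} (ha : a ∈ A) (h : x ≤ a) : projOn A x ≤ a :=
  sInf_le ⟨ha, h⟩

theorem projOn_ne_bot {A : Set B} {x : B} (hx : x ≠ ⊥) : projOn A x ≠ ⊥ :=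
  fun h => hx (le_bot_iff.1 (h ▸ le_projOn A x))

theorem projOn_mem {A : Set B} (hA : IsCompleteSubalgebra A) (x : B) : projOn A x ∈ A :=
  hA.2.2.2.2.2.2 _ (fun _ h => h.1)

theorem key_lemma {A : Set B} (hA : IsCompleteSubalgebra A) {a x : B} (haA : a ∈ A)
    (hle : a ≤ projOn A x) (hd : a ⊓ x = ⊥) : a = ⊥ := by
  have h2 : x ≤ aᶜ := le_compl_iff_disjoint_left.2 (disjoint_iff.2 hd)
  have h4 : a ≤ aᶜ := hle.trans (projOn_le (hA.2.2.1 a haA) h2)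
  have : a ≤ ⊥ := by
    calc a = a ⊓ a := (inf_idem a).symm
    _ ≤ a ⊓ aᶜ := inf_le_inf_left a h4
    _ = ⊥ := inf_compl_eq_bot
  exact le_bot_iff.1 this

/-- The auxiliary simulated play in `B`: the even entries intersect the moves of `a` with
the previous answers of `σ`, the odd entries are the answers of `σ`. -/
noncomputable def mkB (σ : List B → B) (a : ℕ → B) : ℕ → B
  | 0 => a 0
  | (n+1) =>
    if Even n then σ (List.ofFn fun i : Fin (n+1) => mkB σ a i)
    else a (n+1) ⊓ mkB σ a n
termination_by n => n
decreasing_by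
  · exact i.isLt
  · exact Nat.lt_succ_self n

theorem mkB_zero (σ : List B → B) (a : ℕ → B) : mkB σ a 0 = a 0 := by rw [mkB]

theorem mkB_odd (σ : List B → B) (a : ℕ → B) (k : ℕ) :
    mkB σ a (2*k+1) = σ (List.ofFn fun i : Fin (2*k+1) => mkB σ a i) := by
  rw [mkB]; simp [Nat.even_iff]

theorem mkB_even (σ : List B → B) (a : ℕ → B) (k : ℕ) :
    mkB σ a (2*k+2) = a (2*k+2) ⊓ mkB σ a (2*k+1) := by
  rw [mkB]
  have : ¬ Even (2*k+1) := by simp [Nat.even_iff]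
  simp [this]

theorem mkB_congr (σ : List B → B) (a a' : ℕ → B) (n : ℕ)
    (h : ∀ i ≤ n, a i = a' i) : mkB σ a n = mkB σ a' n := by
  induction n using Nat.strong_induction_on with
  | _ n ih =>
    match n with
    | 0 => rw [mkB, mkB]; exact h 0 (le_refl 0)
    | (m+1) =>
      rw [mkB, mkB]
      by_cases he : Even m
      · simp only [he, if_true]
        have : (fun i : Fin (m+1) => mkB σ a i) = fun i : Fin (m+1) => mkB σ a' i :=
          funext fun i => ih i i.isLt (fun j hj => h j (by omega))
        rw [this]
      · simp only [he, if_false]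
        rw [h (m+1) le_rfl, ih m (Nat.lt_succ_self m) (fun j hj => h j (by omega))]

open Classical in
/-- The simulated strategy on `A` obtained from a strategy `σ` on `B`. -/
noncomputable def tauStrat (A : Set B) (σ : List B → B) (l : List B) : B :=
  let c := projOn A (σ (List.ofFn fun i : Fin l.length => mkB σ (fun j => l.getD j ⊥) i))
  if c ≠ ⊥ ∧ c ≤ l.getLastD ⊤ then c else l.getLastD ⊤

set_option linter.unusedSectionVars false in
theorem getLastD_ofFn {n : ℕ} (f : Fin (n+1) → B) (d : B) :
    (List.ofFn f).getLastD d = f ⟨n, Nat.lt_succ_self n⟩ := by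
  have h : List.ofFn f ≠ [] := by simp
  rw [List.getLastD_eq_getLast?, List.getLast?_eq_getLast h, List.getLast_ofFn]
  rfl

set_option linter.unusedSectionVars false in
theorem getD_ofFn {n : ℕ} (f : Fin n → B) (d : B) (j : ℕ) (h : j < n) :
    (List.ofFn f).getD j d = f ⟨j, h⟩ := by
  rw [List.getD_eq_getElem _ _ (by simpa using h), List.getElem_ofFn]

theorem tauStrat_ofFn_eq (A : Set B) (σ : List B → B) (a : ℕ → B) (k : ℕ)
    (h1 : projOn A (mkB σ a (2*k+1)) ≠ ⊥)
    (h2 : projOn A (mkB σ a (2*k+1)) ≤ a (2*k)) :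
    tauStrat A σ (List.ofFn fun i : Fin (2*k+1) => a i) = projOn A (mkB σ a (2*k+1)) := by
  set l := List.ofFn fun i : Fin (2*k+1) => a i with hl
  have hlen : l.length = 2*k+1 := by simp [hl]
  have hlist : (List.ofFn fun i : Fin l.length => mkB σ (fun j => l.getD j ⊥) i)
      = List.ofFn fun i : Fin (2*k+1) => mkB σ a i := by
    apply List.ext_getElem
    · simpa using hlen
    · intro i hi1 hi2
      simp only [List.getElem_ofFn]
      apply mkB_congr
      intro j hj
      have hj2 : j < 2*k+1 := by
        simp only [List.length_ofFn] at hi2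
        omega
      rw [hl, getD_ofFn _ _ _ hj2]
  have hlast : l.getLastD ⊤ = a (2*k) := by
    rw [hl]
    exact getLastD_ofFn (fun i : Fin (2*k+1) => a i) ⊤
  simp only [tauStrat]
  rw [hlist, hlast, ← mkB_odd σ a k]
  rw [if_pos ⟨h1, h2⟩]

theorem tauStrat_valid {A : Set B} (hA : IsCompleteSubalgebra A) (σ : List B → B)
    (l : List B) (hl : ValidPos A l) :
    tauStrat A σ l ∈ A ∧ tauStrat A σ l ≠ ⊥ ∧
      ∀ h : l ≠ [], tauStrat A σ l ≤ l.getLast h := by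
  have hne : l ≠ [] := by
    intro h
    rcases hl.1 with ⟨k, hk⟩
    rw [h] at hk
    simp at hk
  have hlast : l.getLastD ⊤ = l.getLast hne := by
    rw [List.getLastD_eq_getLast?, List.getLast?_eq_getLast hne]
    rfl
  have hlastA : l.getLast hne ∈ A ∧ l.getLast hne ≠ ⊥ := hl.2.2 _ (List.getLast_mem hne)
  simp only [tauStrat]
  split_ifs with h
  · exact ⟨projOn_mem hA _, h.1, fun _ => hlast ▸ h.2⟩
  · rw [hlast]
    exact ⟨hlastA.1, hlastA.2, fun _ => le_rfl⟩

/-- Game-closedness is hereditary: a complete subalgebra of a game-closed complete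
Boolean algebra is game-closed. -/
theorem stmt12 {B : Type*} [CompleteBooleanAlgebra B] (hB : GameClosed B)
    (A : Set B) (hA : IsCompleteSubalgebra A) : GameClosedOn A := by
  obtain ⟨σ, hσv, hσw⟩ := hB
  refine ⟨tauStrat A σ, fun l hl => tauStrat_valid hA σ l hl, ?_⟩
  intro a haA ha0 hdec hcons
  have hb0 : mkB σ a 0 = a 0 := mkB_zero σ a
  have hbodd : ∀ k, mkB σ a (2*k+1) = σ (List.ofFn fun i : Fin (2*k+1) => mkB σ a i) :=
    mkB_odd σ a
  have hbeven : ∀ k, mkB σ a (2*k+2) = a (2*k+2) ⊓ mkB σ a (2*k+1) := mkB_even σ a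
  have hble : ∀ k, mkB σ a (2*k) ≤ a (2*k) := by
    intro k
    cases k with
    | zero => exact hb0.le
    | succ k' =>
      have h2 : 2*(k'+1) = 2*k'+2 := by ring
      rw [h2, hbeven k']
      exact inf_le_left
  have main : ∀ n, mkB σ a n ≠ ⊥ ∧ (∀ m, n = m + 1 → mkB σ a n ≤ mkB σ a m) := by
    intro n
    induction n using Nat.strong_induction_on with
    | _ n ih =>
      rcases n with _ | m
      · exact ⟨hb0 ▸ ha0 0, fun m hm => absurd hm (by omega)⟩
      · rcases Nat.even_or_odd m with hm | hm
        · obtain ⟨k, hk⟩ := hm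
          have hk2 : m = 2*k := by omega
          subst hk2
          have hLvalid : ValidPos (Set.univ : Set B)
              (List.ofFn fun i : Fin (2*k+1) => mkB σ a i) := by
            refine ⟨⟨k, by simp [two_mul]⟩, ?_, ?_⟩
            · rw [List.Chain', List.isChain_ofFn]
              intro i hi
              exact (ih (i+1) (by omega)).2 i rfl
            · intro x hx
              rw [List.mem_ofFn] at hx
              obtain ⟨i, rfl⟩ := hx
              exact ⟨trivial, (ih i (by omega)).1⟩
          obtain ⟨-, hne, hle⟩ := hσv _ hLvalid
          rw [← hbodd k] at hne hle
          refine ⟨hne, ?_⟩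
          intro m' hm'
          have hm'2 : m' = 2*k := by omega
          subst hm'2
          have hlast := hle (by simp)
          rw [List.getLast_ofFn] at hlast
          exact hlast
        · obtain ⟨k, hk⟩ := hm
          subst hk
          have he : mkB σ a (2*k+1+1) = a (2*k+2) ⊓ mkB σ a (2*k+1) := hbeven k
          have hb1 : mkB σ a (2*k+1) ≠ ⊥ := (ih (2*k+1) (by omega)).1
          have hble1 : mkB σ a (2*k+1) ≤ mkB σ a (2*k) := (ih (2*k+1) (by omega)).2 _ rfl
          have haeq : a (2*k+1) = projOn A (mkB σ a (2*k+1)) := by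
            have h1 : projOn A (mkB σ a (2*k+1)) ≠ ⊥ := projOn_ne_bot hb1
            have h2 : projOn A (mkB σ a (2*k+1)) ≤ a (2*k) :=
              projOn_le (haA (2*k)) (le_trans hble1 (hble k))
            exact (hcons k).trans (tauStrat_ofFn_eq A σ a k h1 h2)
          constructor
          · rw [he]
            intro hbot
            have : a (2*k+2) = ⊥ :=
              key_lemma hA (haA _) (le_trans (hdec (2*k+1)) haeq.le) hbot
            exact ha0 _ this
          · intro m' hm'
            have hm'2 : m' = 2*k+1 := by omega
            subst hm'2
            rw [he]
            exact inf_le_right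
  obtain ⟨z, -, hz0, hzle⟩ :=
    hσw (mkB σ a) (fun _ => trivial) (fun n => (main n).1)
      (fun n => (main (n+1)).2 n rfl) hbodd
  refine ⟨projOn A z, projOn_mem hA z, projOn_ne_bot hz0, ?_⟩
  have heven : ∀ k, projOn A z ≤ a (2*k) :=
    fun k => projOn_le (haA (2*k)) (le_trans (hzle (2*k)) (hble k))
  intro n
  rcases Nat.even_or_odd n with hn | hn
  · obtain ⟨k, hk⟩ := hn
    have : n = 2*k := by omega
    rw [this]
    exact heven k
  · obtain ⟨k, hk⟩ := hn
    subst hk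
    have h1 : projOn A z ≤ a (2*k+1+1) := by
      have : 2*(k+1) = 2*k+1+1 := by ring
      exact this ▸ heven (k+1)
    exact le_trans h1 (hdec (2*k+1))
end
end
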